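/- The permutation (swap) operator on ℂⁿ ⊗ ℂⁿ admits the expansion P = Σ_{k,l ∈ ℤ/nℤ} (ω^{kl}/n) A_{kl} ⊗ A_{-k,-l}. -/

import Mathlib

open Matrix

noncomputable def principalOmega (n : ℕ) : ℂ := Complex.exp (2 * Real.pi * Complex.I / n)

noncomputable def principalA (n : ℕ) (i j : ZMod n) : Matrix (ZMod n) (ZMod n) ℂ :=
  Matrix.of fun k l => if l - k = j then principalOmega n ^ ((i * k).val) else 0

lemma principalOmega_isPrimitiveRoot (n : ℕ) [NeZero n] :
    IsPrimitiveRoot (principalOmega n) n := by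
  simpa [principalOmega] using Complex.isPrimitiveRoot_exp n (NeZero.ne n)

lemma principalOmega_pow_mod (n : ℕ) [NeZero n] (a : ℕ) :
    principalOmega n ^ a = principalOmega n ^ (a % n) := by
  conv_lhs => rw [← Nat.mod_add_div a n]
  rw [pow_add, pow_mul, (principalOmega_isPrimitiveRoot n).pow_eq_one, one_pow, mul_one]

lemma principalOmega_pow_val_add (n : ℕ) [NeZero n] (u v : ZMod n) :
    principalOmega n ^ (u + v).val = principalOmega n ^ u.val * principalOmega n ^ v.val := by
  rw [← pow_add, ZMod.val_add, ← principalOmega_pow_mod]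

lemma principalOmega_pow_val_mul (n : ℕ) [NeZero n] (u v : ZMod n) :
    principalOmega n ^ (u * v).val = (principalOmega n ^ v.val) ^ u.val := by
  rw [← pow_mul, ZMod.val_mul, mul_comm u.val, ← principalOmega_pow_mod]

lemma principalOmega_key_sum (n : ℕ) [NeZero n] (x : ZMod n) :
    ∑ k : ZMod n, principalOmega n ^ ((k * x).val) = if x = 0 then (n : ℂ) else 0 := by
  have hsum : ∑ k : ZMod n, principalOmega n ^ ((k * x).val)
      = ∑ i ∈ Finset.range n, (principalOmega n ^ x.val) ^ i := by
    refine Finset.sum_nbij' (fun k => k.val) (fun i => (i : ZMod n)) ?_ ?_ ?_ ?_ ?_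
    · intro k _; exact Finset.mem_range.mpr (ZMod.val_lt k)
    · intro i _; exact Finset.mem_univ _
    · intro k _; exact ZMod.natCast_zmod_val k
    · intro i hi; exact ZMod.val_natCast_of_lt (Finset.mem_range.mp hi)
    · intro k _; exact principalOmega_pow_val_mul n k x
  rw [hsum]
  by_cases hx : x = 0
  · simp [hx, ZMod.val_zero]
  · have hz : principalOmega n ^ x.val ≠ 1 := by
      intro h
      have := ((principalOmega_isPrimitiveRoot n).pow_eq_one_iff_dvd x.val).mp h
      have hlt := ZMod.val_lt x
      exact hx ((ZMod.val_eq_zero x).mp (Nat.eq_zero_of_dvd_of_lt this hlt))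
    rw [geom_sum_eq hz, ← pow_mul, mul_comm, pow_mul,
      (principalOmega_isPrimitiveRoot n).pow_eq_one, one_pow]
    simp [hx]

open Kronecker in
theorem swap_eq_principal_expansion (n : ℕ) [NeZero n] :
    (∑ i : ZMod n, ∑ j : ZMod n,
        (Matrix.single i j (1 : ℂ)) ⊗ₖ (Matrix.single j i (1 : ℂ))) =
      ∑ k : ZMod n, ∑ l : ZMod n,
        (principalOmega n ^ ((k * l).val) / n) •
          (principalA n k l ⊗ₖ principalA n (-k) (-l)) := by
  ext ⟨a, b⟩ ⟨c, d⟩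
  simp only [Matrix.sum_apply, Matrix.kroneckerMap_apply, Matrix.smul_apply,
    Matrix.single, Matrix.of_apply, principalA, smul_eq_mul]
  simp only [mul_ite, mul_zero, ite_mul, zero_mul, mul_one, one_mul]
  have hL : (∑ x : ZMod n, ∑ y : ZMod n,
      (if y = b ∧ x = d then (if x = a ∧ y = c then (1:ℂ) else 0) else 0))
      = if d = a ∧ b = c then 1 else 0 := by
    simp only [ite_and]
    rw [Finset.sum_eq_single d]
    · rw [Finset.sum_eq_single b]
      · simp
      · intro y _ hy; simp [hy]
      · simp
    · intro x _ hx
      rw [Finset.sum_eq_single b]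
      · simp [hx]
      · intro y _ hy; simp [hy]
      · simp
    · simp
  have hterm : ∀ x : ZMod n,
      principalOmega n ^ (x * (c - a)).val / (n : ℂ) *
        (principalOmega n ^ (x * a).val * principalOmega n ^ ((-x) * b).val)
      = principalOmega n ^ (x * (c - b)).val / n := by
    intro x
    rw [div_mul_eq_mul_div, ← principalOmega_pow_val_add, ← principalOmega_pow_val_add]
    congr 2
    ring
  have hR : ∀ x : ZMod n,
      (∑ y : ZMod n, if d - b = -y then if c - a = y then
          principalOmega n ^ (x * y).val / (n : ℂ) *
            (principalOmega n ^ (x * a).val * principalOmega n ^ (-x * b).val) else 0 else 0)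
      = if d - b = a - c then principalOmega n ^ (x * (c - b)).val / n else 0 := by
    intro x
    rw [Finset.sum_eq_single (c - a)]
    · rw [if_pos rfl, hterm, neg_sub]
    · intro y _ hy
      have h2 : ¬ (c - a = y) := fun h => hy h.symm
      simp [h2]
    · simp
  rw [hL, Finset.sum_congr rfl (fun x _ => hR x)]
  by_cases h : d - b = a - c
  · simp only [if_pos h, Finset.sum_div]
    rw [← Finset.sum_div, principalOmega_key_sum n (c - b)]
    by_cases hbc : b = c
    · have hda : d = a := by
        have h2 := h; rw [hbc] at h2; exact sub_left_inj.mp h2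
      simp [hbc, hda, sub_eq_zero.mpr hbc.symm, div_self (Nat.cast_ne_zero.mpr (NeZero.ne n) : (n:ℂ) ≠ 0)]
    · have : ¬ (c - b = 0) := fun hh => hbc (sub_eq_zero.mp hh).symm
      simp [this, hbc]
  · have : ¬ (d = a ∧ b = c) := by
      rintro ⟨rfl, rfl⟩; exact h (by ring)
    simp [h, this]
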